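/- Let H₀, H₁ ∈ B(𝓗) be self-adjoint, let c ∈ ℝ, set H := H₀ + c·H₁, and assume that the spectra of H₀ and of H are both contained in [1,∞). With K₀ := ‖H₁·(√H₀)⁻¹‖, one has ‖√H·(√H₀)⁻¹‖ ≤ √(1 + |c|·K₀). -/

import Mathlib

open MeasureTheory
set_option synthInstance.maxHeartbeats 1000000
set_option maxHeartbeats 1000000

variable {𝓗 : Type*} [NormedAddCommGroup 𝓗] [InnerProductSpace ℂ 𝓗] [CompleteSpace 𝓗]

/-- Let `H := H₀ + c·H₁` with `H₀, H₁` self-adjoint and spectra of `H₀` and `H`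
in `[1,∞)`.  With `K₀ := ‖H₁·(√H₀)⁻¹‖`, one has `‖√H·(√H₀)⁻¹‖ ≤ √(1 + |c|·K₀)`. -/
theorem stmt_11 (H₀ H₁ : 𝓗 →L[ℂ] 𝓗) (hH₀ : IsSelfAdjoint H₀) (hH₁ : IsSelfAdjoint H₁)
    (c : ℝ) (H : 𝓗 →L[ℂ] 𝓗) (hH : H = H₀ + c • H₁)
    (hspec₀ : spectrum ℝ H₀ ⊆ Set.Ici 1) (hspec : spectrum ℝ H ⊆ Set.Ici 1)
    (K₀ : ℝ) (hK₀ : K₀ = ‖H₁ * Ring.inverse (CFC.sqrt H₀)‖) :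
    ‖CFC.sqrt H * Ring.inverse (CFC.sqrt H₀)‖ ≤ Real.sqrt (1 + |c| * K₀) := by
  have hH₀nn : (0 : 𝓗 →L[ℂ] 𝓗) ≤ H₀ := by
    rw [StarOrderedRing.nonneg_iff_spectrum_nonneg (R := ℝ) H₀ hH₀]
    exact fun x hx ↦ le_trans zero_le_one (hspec₀ hx)
  have hsm : IsSelfAdjoint (c • H₁) := by
    rw [IsSelfAdjoint, star_smul, star_trivial, hH₁.star_eq]
  have hHsa : IsSelfAdjoint H := by rw [hH]; exact hH₀.add hsm
  have hHnn : (0 : 𝓗 →L[ℂ] 𝓗) ≤ H := by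
    rw [StarOrderedRing.nonneg_iff_spectrum_nonneg (R := ℝ) H hHsa]
    exact fun x hx ↦ le_trans zero_le_one (hspec hx)
  set R := CFC.sqrt H₀ with hRdef
  have hsq : ∀ x ∈ spectrum ℝ H₀, Real.sqrt x ≠ 0 := fun x hx ↦
    Real.sqrt_ne_zero'.mpr (lt_of_lt_of_le one_pos (hspec₀ hx))
  have hRcfc : R = cfc Real.sqrt H₀ := by
    rw [hRdef, CFC.sqrt_eq_cfc, cfc_nnreal_eq_real _ _ hH₀nn]
    exact cfc_congr fun x hx ↦ by rw [Real.sqrt]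
  have hu : IsUnit R := by
    rw [hRcfc]
    exact isUnit_cfc_iff Real.sqrt H₀ (by fun_prop) hH₀ |>.mpr hsq
  set Ri := Ring.inverse R with hRidef
  have hRi : Ri = cfc (fun x : ℝ ↦ (Real.sqrt x)⁻¹) H₀ := by
    rw [hRidef, hRcfc]
    exact (cfc_inv Real.sqrt H₀ hsq (by fun_prop) hH₀).symm
  have hRinorm : ‖Ri‖ ≤ 1 := by
    rw [hRi]
    refine norm_cfc_le zero_le_one fun x hx ↦ ?_
    rw [Real.norm_eq_abs, abs_of_nonneg (inv_nonneg.mpr (Real.sqrt_nonneg x))]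
    exact inv_le_one_of_one_le₀ ((Real.one_le_sqrt).mpr (hspec₀ hx))
  have hRinn : (0 : 𝓗 →L[ℂ] 𝓗) ≤ Ri := by
    rw [hRi]
    exact cfc_nonneg fun x _ ↦ inv_nonneg.mpr (Real.sqrt_nonneg x)
  have hRisa : IsSelfAdjoint Ri := .of_nonneg hRinn
  have hSsa : IsSelfAdjoint (CFC.sqrt H) := .of_nonneg (CFC.sqrt_nonneg H)
  have hRR : R * R = H₀ := CFC.sqrt_mul_sqrt_self H₀ hH₀nn
  have hSS : CFC.sqrt H * CFC.sqrt H = H := CFC.sqrt_mul_sqrt_self H hHnn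
  have hRiR : Ri * R = 1 := Ring.inverse_mul_cancel R hu
  have hRRi : R * Ri = 1 := Ring.mul_inverse_cancel R hu
  have h1 : Ri * H₀ * Ri = 1 := by
    rw [← hRR, show Ri * (R * R) * Ri = (Ri * R) * (R * Ri) by noncomm_ring, hRiR, hRRi, one_mul]
  have key : star (CFC.sqrt H * Ri) * (CFC.sqrt H * Ri) = 1 + c • (Ri * H₁ * Ri) := by
    rw [star_mul, hSsa.star_eq, hRisa.star_eq,
      show Ri * CFC.sqrt H * (CFC.sqrt H * Ri) = Ri * (CFC.sqrt H * CFC.sqrt H) * Ri by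
        noncomm_ring, hSS, hH]
    rw [show Ri * (H₀ + c • H₁) * Ri = Ri * H₀ * Ri + c • (Ri * H₁ * Ri) by
      simp [mul_add, add_mul, mul_smul_comm, smul_mul_assoc], h1]
  have hn : ‖CFC.sqrt H * Ri‖ ^ 2 ≤ 1 + |c| * K₀ := by
    rw [sq, ← CStarRing.norm_star_mul_self, key]
    calc ‖(1 : 𝓗 →L[ℂ] 𝓗) + c • (Ri * H₁ * Ri)‖
        ≤ ‖(1 : 𝓗 →L[ℂ] 𝓗)‖ + ‖c • (Ri * H₁ * Ri)‖ := norm_add_le _ _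
      _ ≤ 1 + |c| * ‖Ri * (H₁ * Ri)‖ := by
          rw [norm_smul, Real.norm_eq_abs, mul_assoc]
          exact add_le_add ContinuousLinearMap.norm_id_le le_rfl
      _ ≤ 1 + |c| * (‖Ri‖ * ‖H₁ * Ri‖) := by
          gcongr
          exact norm_mul_le _ _
      _ ≤ 1 + |c| * (1 * ‖H₁ * Ri‖) := by gcongr
      _ = 1 + |c| * K₀ := by rw [hK₀, one_mul]
  calc ‖CFC.sqrt H * Ri‖ = Real.sqrt (‖CFC.sqrt H * Ri‖ ^ 2) := (Real.sqrt_sq (norm_nonneg _)).symm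
    _ ≤ Real.sqrt (1 + |c| * K₀) := Real.sqrt_le_sqrt hn
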